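/- Let m ≥ 4 be a natural number and let (k₁,k₂,k₃,k₄) be a quadruple of natural numbers with k₃ < k₁ ≤ k₂ < k₄ ≤ m−1 and k₁+k₂ = k₃+k₄. Then the complex number f = ((1−ζ^k₁)(1−ζ^k₂))/((1−ζ^k₃)(1−ζ^k₄)), where ζ = exp(2πi/m), is real and satisfies f > 1. -/

import Mathlib

/-- ζ_m = exp(2πi/m), a primitive m-th root of unity. -/
noncomputable def zetaC (m : ℕ) : ℂ := Complex.exp (2 * Real.pi * Complex.I / m)

/-- f_m(k₁,k₂,k₃,k₄) = ((1−ζ^k₁)(1−ζ^k₂))/((1−ζ^k₃)(1−ζ^k₄)). -/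
noncomputable def fm (m k1 k2 k3 k4 : ℕ) : ℂ :=
  ((1 - zetaC m ^ k1) * (1 - zetaC m ^ k2)) / ((1 - zetaC m ^ k3) * (1 - zetaC m ^ k4))

/-- For m ≥ 4 and (k₁,k₂,k₃,k₄) ∈ D_m, the value f_m(k₁,k₂,k₃,k₄) is a real number
greater than 1. -/
lemma one_sub_pow (m k : ℕ) (hm : 0 < m) :
    1 - zetaC m ^ k =
      -2 * Complex.I * (Real.sin (Real.pi * k / m) : ℂ) *
        Complex.exp ((Real.pi * k / m : ℝ) * Complex.I) := by
  have hm' : (m : ℂ) ≠ 0 := Nat.cast_ne_zero.mpr hm.ne'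
  have hz : zetaC m ^ k = Complex.exp (((Real.pi * k / m : ℝ) : ℂ) * Complex.I * 2) := by
    rw [zetaC, ← Complex.exp_nat_mul]
    congr 1
    push_cast
    field_simp
  rw [hz, Complex.ofReal_sin]
  set a : ℂ := ((Real.pi * k / m : ℝ) : ℂ) with ha
  rw [Complex.sin]
  have e1 : Complex.exp (-a*Complex.I) * Complex.exp (a*Complex.I) = 1 := by
    rw [← Complex.exp_add]; ring_nf; simp
  have e2 : Complex.exp (a*Complex.I) * Complex.exp (a*Complex.I)
      = Complex.exp (a*Complex.I*2) := by
    rw [← Complex.exp_add]; ring_nf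
  have i2 : Complex.I ^ 2 = -1 := Complex.I_sq
  linear_combination -e1 + e2 + (Complex.exp (-a*Complex.I) * Complex.exp (a*Complex.I)
    - Complex.exp (a*Complex.I) * Complex.exp (a*Complex.I)) * i2

lemma aux_div (s1 s2 s3 s4 : ℝ) (a1 a2 a3 a4 : ℂ) (hs3 : s3 ≠ 0) (hs4 : s4 ≠ 0)
    (hsum : a1 + a2 = a3 + a4) :
    ((-2 * Complex.I * (s1:ℂ) * Complex.exp a1) * (-2 * Complex.I * (s2:ℂ) * Complex.exp a2)) /
      ((-2 * Complex.I * (s3:ℂ) * Complex.exp a3) * (-2 * Complex.I * (s4:ℂ) * Complex.exp a4))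
      = ((s1 * s2) / (s3 * s4) : ℝ) := by
  have hE : Complex.exp a1 * Complex.exp a2 = Complex.exp a3 * Complex.exp a4 := by
    rw [← Complex.exp_add, ← Complex.exp_add, hsum]
  have hs3' : (s3:ℂ) ≠ 0 := by exact_mod_cast hs3
  have hs4' : (s4:ℂ) ≠ 0 := by exact_mod_cast hs4
  have h2I : (-2 : ℂ) * Complex.I ≠ 0 :=
    mul_ne_zero (by norm_num) Complex.I_ne_zero
  have hD : (-2 * Complex.I * (s3:ℂ) * Complex.exp a3) *
      (-2 * Complex.I * (s4:ℂ) * Complex.exp a4) ≠ 0 :=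
    mul_ne_zero (mul_ne_zero (mul_ne_zero h2I hs3') (Complex.exp_ne_zero _))
      (mul_ne_zero (mul_ne_zero h2I hs4') (Complex.exp_ne_zero _))
  have hB : ((s3 * s4 : ℝ) : ℂ) ≠ 0 := by
    push_cast; exact mul_ne_zero hs3' hs4'
  rw [Complex.ofReal_div, div_eq_div_iff hD hB]
  push_cast
  linear_combination (4 * Complex.I^2 * (s1:ℂ) * s2 * s3 * s4) * hE

theorem fm_real_and_gt_one (m k1 k2 k3 k4 : ℕ) (hm : 4 ≤ m)
    (hk3 : 0 < k3) (h31 : k3 < k1) (h12 : k1 ≤ k2) (h24 : k2 < k4)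
    (h4m : k4 ≤ m - 1) (hsum : k1 + k2 = k3 + k4) :
    (fm m k1 k2 k3 k4).im = 0 ∧ 1 < (fm m k1 k2 k3 k4).re := by
  have hm0 : 0 < m := by omega
  have hmR : (0:ℝ) < m := by exact_mod_cast hm0
  have hpi := Real.pi_pos
  have hsin : ∀ k : ℕ, 0 < k → k < m → 0 < Real.sin (Real.pi * k / m) := by
    intro k hk hkm
    apply Real.sin_pos_of_pos_of_lt_pi
    · apply div_pos (by positivity) hmR
    · rw [div_lt_iff₀ hmR]
      have : (k:ℝ) < m := by exact_mod_cast hkm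
      nlinarith
  have hs1 := hsin k1 (by omega) (by omega)
  have hs2 := hsin k2 (by omega) (by omega)
  have hs3 := hsin k3 hk3 (by omega)
  have hs4 := hsin k4 (by omega) (by omega)
  have hsumR : (Real.pi * k1 / m) + Real.pi * k2 / m
      = (Real.pi * k3 / m) + Real.pi * k4 / m := by
    have : (k1:ℝ) + k2 = k3 + k4 := by exact_mod_cast hsum
    field_simp
    nlinarith
  have key : fm m k1 k2 k3 k4
      = (((Real.sin (Real.pi * k1 / m) * Real.sin (Real.pi * k2 / m)) /
          (Real.sin (Real.pi * k3 / m) * Real.sin (Real.pi * k4 / m)) : ℝ) : ℂ) := by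
    rw [fm, one_sub_pow m k1 hm0, one_sub_pow m k2 hm0, one_sub_pow m k3 hm0,
      one_sub_pow m k4 hm0]
    apply aux_div _ _ _ _ _ _ _ _ hs3.ne' hs4.ne'
    have h' : ((Real.pi * k1 / m : ℝ) : ℂ) + ((Real.pi * k2 / m : ℝ) : ℂ)
        = ((Real.pi * k3 / m : ℝ) : ℂ) + ((Real.pi * k4 / m : ℝ) : ℂ) := by
      exact_mod_cast congrArg (fun x : ℝ => (x:ℂ)) hsumR
    linear_combination Complex.I * h'
  set A1 := Real.pi * k1 / m
  set A2 := Real.pi * k2 / m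
  set A3 := Real.pi * k3 / m
  set A4 := Real.pi * k4 / m
  have prod_id : ∀ a b : ℝ,
      Real.sin a * Real.sin b = (Real.cos (a - b) - Real.cos (a + b)) / 2 := by
    intro a b; rw [Real.cos_sub, Real.cos_add]; ring
  have hx : (0:ℝ) ≤ A2 - A1 := by
    have : (k1:ℝ) ≤ k2 := by exact_mod_cast h12
    have : A1 ≤ A2 := by simp only [A1, A2]; gcongr
    linarith
  have hy : A4 - A3 ≤ Real.pi := by
    have h4 : (k4:ℝ) ≤ m := by exact_mod_cast Nat.le_of_lt_succ (by omega)
    have h3 : (0:ℝ) ≤ k3 := by positivity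
    have e : A4 - A3 = Real.pi * ((k4:ℝ) - k3) / m := by simp only [A3, A4]; ring
    rw [e, div_le_iff₀ hmR]
    nlinarith
  have hxy : A2 - A1 < A4 - A3 := by
    have hlt : (k2:ℝ) - k1 < (k4:ℝ) - k3 := by
      have h1 : (k1:ℝ) + k2 = k3 + k4 := by exact_mod_cast hsum
      have h2 : (k3:ℝ) < k1 := by exact_mod_cast h31
      linarith
    have e1 : A2 - A1 = Real.pi * ((k2:ℝ) - k1) / m := by simp only [A1, A2]; ring
    have e2 : A4 - A3 = Real.pi * ((k4:ℝ) - k3) / m := by simp only [A3, A4]; ring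
    rw [e1, e2, div_lt_div_iff₀ hmR hmR]
    nlinarith [mul_pos hpi hmR]
  have hcos : Real.cos (A4 - A3) < Real.cos (A2 - A1) :=
    Real.cos_lt_cos_of_nonneg_of_le_pi hx hy hxy
  have c12 : Real.cos (A1 - A2) = Real.cos (A2 - A1) := by
    rw [← Real.cos_neg]; ring_nf
  have c34 : Real.cos (A3 - A4) = Real.cos (A4 - A3) := by
    rw [← Real.cos_neg]; ring_nf
  have hprod : Real.sin A3 * Real.sin A4 < Real.sin A1 * Real.sin A2 := by
    rw [prod_id, prod_id, hsumR, c12, c34]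
    linarith
  constructor
  · rw [key]; exact Complex.ofReal_im _
  · rw [key, Complex.ofReal_re, one_lt_div (by positivity)]
    exact hprod
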